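/- Let P ∈ ℂ[X] be a polynomial of degree ν ≥ 1 such that every root of P lies in the closed unit disk {|z| ≤ 1} and every root of P of modulus 1 is a simple root. Then there exist a positive definite Hermitian form q_e on ℂ^ν and a nonnegative Hermitian form q_d on ℂ^ν such that for every sequence v : ℕ → ℂ and every n ∈ ℕ, writing P = Σ_i c_i X^i, one has 2·Re( conj(Σ_{i=1}^{ν} i·c_i·v(n+i)) · (P(T)v)(n) ) = ν·|(P(T)v)(n)|² + q_e(v(n+1),…,v(n+ν)) − q_e(v(n),…,v(n+ν−1)) + q_d(v(n),…,v(n+ν−1)). In particular, for any sequence v : ℕ → ℂ satisfying (P(T)v)(n) = 0 for all n ∈ ℕ, the sequence n ↦ q_e(v(n),…,v(n+ν−1)) is nonincreasing. -/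

import Mathlib

open Polynomial
open scoped ComplexOrder

/-- The action `(Q(T)v)(n) = Σ_i c_i v(n+i)` of a polynomial `Q = Σ_i c_i X^i`
on a sequence `v : ℕ → ℂ`, where `T` is the shift operator. -/
noncomputable def polyAct (Q : Polynomial ℂ) (v : ℕ → ℂ) (n : ℕ) : ℂ :=
  ∑ i ∈ Finset.range (Q.natDegree + 1), Q.coeff i * v (n + i)

/-- The Hermitian form `w ↦ Re (w* H w)` associated with a matrix `H`. -/
noncomputable def hermForm {ν : ℕ} (H : Matrix (Fin ν) (Fin ν) ℂ) (w : Fin ν → ℂ) : ℝ :=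
  (dotProduct (star w) (H.mulVec w)).re


noncomputable section EnergyDissipation


abbrev outM {ν : ℕ} (u : Fin ν → ℂ) : Matrix (Fin ν) (Fin ν) ℂ :=
  Matrix.vecMulVec (star u) u

lemma outM_isHermitian {ν : ℕ} (u : Fin ν → ℂ) : (outM u).IsHermitian := by
  ext i j
  simp [outM, Matrix.conjTranspose_apply, Matrix.vecMulVec_apply, mul_comm]

lemma outM_quad {ν : ℕ} (u w : Fin ν → ℂ) :
    dotProduct (star w) ((outM u).mulVec w)
      = (Complex.normSq (dotProduct u w) : ℂ) := by
  have h1 : (outM u).mulVec w = fun i => (starRingEnd ℂ) (u i) * dotProduct u w := by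
    ext i
    simp [outM, Matrix.mulVec, dotProduct, Matrix.vecMulVec_apply, Finset.mul_sum,
      mul_assoc]
  rw [h1, Complex.normSq_eq_conj_mul_self]
  simp only [dotProduct, Pi.star_apply, map_sum]
  rw [Finset.sum_mul]
  refine Finset.sum_congr rfl fun i _ => ?_
  rw [_root_.map_mul]
  simp only [RCLike.star_def]
  ring



lemma isHermitian_sum {n : Type*} [Fintype n] {ι : Type*} (s : Finset ι)
    (f : ι → Matrix n n ℂ) (h : ∀ i ∈ s, (f i).IsHermitian) :
    (∑ i ∈ s, f i).IsHermitian :=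
  Finset.sum_induction f _ (fun _ _ ha hb => ha.add hb) Matrix.isHermitian_zero h


lemma quad_smul {ν : ℕ} (c : ℂ) (H : Matrix (Fin ν) (Fin ν) ℂ) (w : Fin ν → ℂ) :
    dotProduct (star w) ((c • H).mulVec w)
      = c * dotProduct (star w) (H.mulVec w) := by
  rw [Matrix.smul_mulVec, dotProduct_smul, smul_eq_mul]

lemma quad_sub {ν : ℕ} (A B : Matrix (Fin ν) (Fin ν) ℂ) (w : Fin ν → ℂ) :
    dotProduct (star w) ((A - B).mulVec w)
      = dotProduct (star w) (A.mulVec w) - dotProduct (star w) (B.mulVec w) := by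
  rw [Matrix.sub_mulVec, dotProduct_sub]

lemma quad_add {ν : ℕ} (A B : Matrix (Fin ν) (Fin ν) ℂ) (w : Fin ν → ℂ) :
    dotProduct (star w) ((A + B).mulVec w)
      = dotProduct (star w) (A.mulVec w) + dotProduct (star w) (B.mulVec w) := by
  rw [Matrix.add_mulVec, dotProduct_add]

lemma quad_sum {ν : ℕ} {ι : Type*} (s : Finset ι) (f : ι → Matrix (Fin ν) (Fin ν) ℂ)
    (w : Fin ν → ℂ) :
    dotProduct (star w) ((∑ i ∈ s, f i).mulVec w)
      = ∑ i ∈ s, dotProduct (star w) ((f i).mulVec w) := by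
  classical
  induction s using Finset.cons_induction with
  | empty => simp
  | cons a s ha ih =>
      rw [Finset.sum_cons, Matrix.add_mulVec, dotProduct_add, ih, Finset.sum_cons]

lemma normSq_add_le (s : ℝ) (hs : 0 < s) (x y : ℂ) :
    Complex.normSq (x + y) ≤ (1 + 1/s) * Complex.normSq x + (1 + s) * Complex.normSq y := by
  have h1 : ‖x + y‖ ≤ ‖x‖ + ‖y‖ := norm_add_le x y
  have h2 : (‖x+y‖)^2 = Complex.normSq (x+y) := Complex.sq_norm _
  have h3 : (‖x‖)^2 = Complex.normSq x := Complex.sq_norm _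
  have h4 : (‖y‖)^2 = Complex.normSq y := Complex.sq_norm _
  have hx := norm_nonneg x
  have hy := norm_nonneg y
  have hxy := norm_nonneg (x+y)
  set A := ‖x‖ with hA
  set B := ‖y‖ with hB
  have key2 : 2*A*B*s ≤ A^2 + s^2*B^2 := by nlinarith [sq_nonneg (A - s*B)]
  have key : 2*(A*B) ≤ 1/s*A^2 + s*B^2 := by
    rw [← mul_le_mul_iff_left₀ hs]
    calc 2*(A*B)*s = 2*A*B*s := by ring
    _ ≤ A^2+s^2*B^2 := key2
    _ = (1/s*A^2 + s*B^2)*s := by field_simp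
  have h5 : (‖x+y‖)^2 ≤ (A+B)^2 := by nlinarith
  have h6 : (A+B)^2 = A^2 + 2*(A*B) + B^2 := by ring
  have h7 : 1/s * A^2 = 1/s * Complex.normSq x := by rw [h3]
  have h8 : s * B^2 = s * Complex.normSq y := by rw [h4]
  nlinarith [key, h5, h6, h7, h8]

/-- weights -/
def tw (m : ℕ) (e : ℝ) : ℕ → ℝ := fun k =>
  if k ≤ 1 then (m : ℝ) else (m * e^2/(e+2)) * (e^2/(2*(e+2)))^(k-2)

def ew (m : ℕ) (e : ℝ) (r : ℂ) : ℕ → ℝ := fun k =>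
  if k ≤ 1 then (m : ℝ) * e else tw m e k * (1 - (1+e/2) * Complex.normSq r)

lemma tw_pos {m : ℕ} {e : ℝ} (hm : 0 < m) (he : 0 < e) (k : ℕ) : 0 < tw m e k := by
  unfold tw
  split
  · exact_mod_cast hm
  · positivity






lemma Icc_two_succ {M : ℕ} (hM : 1 ≤ M) :
    Finset.Icc 2 (M+1) = insert (M+1) (Finset.Icc 2 M) := by
  ext x
  simp only [Finset.mem_Icc, Finset.mem_insert]
  omega


lemma block_claim (m : ℕ) (hm2 : 2 ≤ m) (r : ℂ) (hr : Complex.normSq r < 1) (c : ℕ → ℂ) :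
    ∀ M, 1 ≤ M →
      ∑ k ∈ Finset.Icc 2 M, tw m (1 - Complex.normSq r) k * Complex.normSq (c (k-1) + r * c k)
        ≤ (m:ℝ) * (1 - Complex.normSq r) * Complex.normSq (c 1)
          + ∑ k ∈ Finset.Icc 2 M, tw m (1 - Complex.normSq r) k * Complex.normSq (c k)
          - ew m (1 - Complex.normSq r) r M * Complex.normSq (c M) := by
  set e := 1 - Complex.normSq r with hedef
  have he : 0 < e := by simp [hedef]; linarith
  have hm0 : 0 < m := by omega
  have hnr : Complex.normSq r = 1 - e := by rw [hedef]; ring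
  have hnr0 : 0 ≤ Complex.normSq r := Complex.normSq_nonneg r
  intro M hM
  induction M, hM using Nat.le_induction with
  | base =>
      simp [ew, tw]
  | succ M hM ih =>
      have ihh := ih
      rw [Icc_two_succ hM, Finset.sum_insert (by simp [Finset.mem_Icc]),
        Finset.sum_insert (by simp [Finset.mem_Icc])]
      -- step bound
      have htpos : 0 < tw m e (M+1) := tw_pos hm0 he _
      have hs2 : (0:ℝ) < e/2 := by linarith
      have hone : 1/(e/2) = 2/e := by field_simp
      have hstep0 : Complex.normSq (c M + r * c (M+1))
          ≤ (1 + 2/e) * Complex.normSq (c M) + (1 + e/2) * (Complex.normSq r * Complex.normSq (c (M+1))) := by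
        have := normSq_add_le (e/2) hs2 (c M) (r * c (M+1))
        rw [hone] at this
        rwa [Complex.normSq_mul] at this
      have f1 : tw m e (M+1) * (1 + 2/e) ≤ ew m e r M := by
        rcases eq_or_lt_of_le hM with h1 | h1
        · -- M = 1
          have hM1 : M = 1 := h1.symm
          subst hM1
          have : tw m e 2 * (1 + 2/e) = m * e := by
            unfold tw
            norm_num
            field_simp
          rw [this]
          simp [ew]
        · -- M ≥ 2
          have hM2 : 2 ≤ M := h1
          have htw : tw m e (M+1) = tw m e M * (e^2/(2*(e+2))) := by
            unfold tw
            have h3 : ¬ (M + 1 ≤ 1) := by omega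
            have h4 : ¬ (M ≤ 1) := by omega
            rw [if_neg h3, if_neg h4]
            have h5 : M + 1 - 2 = (M - 2) + 1 := by omega
            rw [h5, pow_succ]
            ring
          have hgam : tw m e (M+1) * (1 + 2/e) = tw m e M * (e/2) := by
            rw [htw]
            field_simp
          rw [hgam]
          have hewM : ew m e r M = tw m e M * (1 - (1+e/2) * Complex.normSq r) := by
            unfold ew
            rw [if_neg (by omega)]
          rw [hewM]
          have hb : e/2 ≤ 1 - (1+e/2) * Complex.normSq r := by
            rw [hnr]; nlinarith
          have := tw_pos hm0 he M
          nlinarith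
      have f2 : tw m e (M+1) * ((1 + e/2) * Complex.normSq r)
          = tw m e (M+1) - ew m e r (M+1) := by
        unfold ew
        rw [if_neg (by omega)]
        ring
      have hstep : tw m e (M+1) * Complex.normSq (c M + r * c (M+1))
          ≤ ew m e r M * Complex.normSq (c M)
            + (tw m e (M+1) - ew m e r (M+1)) * Complex.normSq (c (M+1)) := by
        have h6 := mul_le_mul_of_nonneg_left hstep0 htpos.le
        rw [mul_add] at h6
        have h7 : tw m e (M+1) * ((1 + 2/e) * Complex.normSq (c M))
            ≤ ew m e r M * Complex.normSq (c M) := by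
          have := mul_le_mul_of_nonneg_right f1 (Complex.normSq_nonneg (c M))
          nlinarith [Complex.normSq_nonneg (c M)]
        have h8 : tw m e (M+1) * ((1 + e/2) * (Complex.normSq r * Complex.normSq (c (M+1))))
            = (tw m e (M+1) - ew m e r (M+1)) * Complex.normSq (c (M+1)) := by
          rw [← f2]; ring
        linarith
      simp only [Nat.add_sub_cancel]
      linarith

lemma block_nonneg (m : ℕ) (hm : 1 ≤ m) (r : ℂ) (h1 : Complex.normSq r ≤ 1)
    (h2 : 2 ≤ m → Complex.normSq r < 1) (c : ℕ → ℂ) :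
    0 ≤ (m:ℝ) * (1 - Complex.normSq r) * Complex.normSq (c 1)
      + ∑ k ∈ Finset.Icc 2 m, tw m (1 - Complex.normSq r) k *
          (Complex.normSq (c k) - Complex.normSq (c (k-1) + r * c k)) := by
  rcases eq_or_lt_of_le hm with hm1 | hm2
  · have : m = 1 := hm1.symm
    subst this
    have : Finset.Icc 2 1 = (∅ : Finset ℕ) := by decide
    rw [this]
    simp only [Finset.sum_empty, add_zero]
    exact mul_nonneg (mul_nonneg (by norm_num) (by linarith)) (Complex.normSq_nonneg _)
  · have hm2' : 2 ≤ m := hm2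
    have hr := h2 hm2'
    have hclaim := block_claim m hm2' r hr c m (by omega)
    have hew : 0 ≤ ew m (1 - Complex.normSq r) r m * Complex.normSq (c m) := by
      have he : 0 < 1 - Complex.normSq r := by linarith
      have : 0 < ew m (1 - Complex.normSq r) r m := by
        unfold ew
        rw [if_neg (by omega)]
        have h3 : 0 < tw m (1 - Complex.normSq r) m := tw_pos (by omega) he m
        nlinarith [Complex.normSq_nonneg r, mul_pos h3 he, sq_nonneg (1 - Complex.normSq r)]
      exact mul_nonneg this.le (Complex.normSq_nonneg _)
    have hsplit : ∑ k ∈ Finset.Icc 2 m, tw m (1 - Complex.normSq r) k *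
          (Complex.normSq (c k) - Complex.normSq (c (k-1) + r * c k))
        = ∑ k ∈ Finset.Icc 2 m, tw m (1 - Complex.normSq r) k * Complex.normSq (c k)
          - ∑ k ∈ Finset.Icc 2 m, tw m (1 - Complex.normSq r) k * Complex.normSq (c (k-1) + r * c k) := by
      rw [← Finset.sum_sub_distrib]
      refine Finset.sum_congr rfl fun k _ => by ring
    linarith



def rts (P : Polynomial ℂ) : Finset ℂ := P.roots.toFinset
def mlt (P : Polynomial ℂ) (r : ℂ) : ℕ := P.roots.count r
def gp (P : Polynomial ℂ) (r : ℂ) (k : ℕ) : Polynomial ℂ := P /ₘ ((X - C r)^k)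

variable {P : Polynomial ℂ}

lemma mlt_eq (r : ℂ) : mlt P r = rootMultiplicity r P := P.count_roots

lemma mlt_pos {r : ℂ} (hr : r ∈ rts P) : 1 ≤ mlt P r := by
  rw [mlt, Nat.one_le_iff_ne_zero]
  simp only [rts, Multiset.mem_toFinset] at hr
  exact fun h => (Multiset.count_pos.2 hr).ne' h

lemma pow_dvd_P {r : ℂ} {k : ℕ} (h : k ≤ mlt P r) : (X - C r)^k ∣ P :=
  (pow_dvd_pow _ (by rwa [mlt_eq] at h)).trans (P.pow_rootMultiplicity_dvd r)

lemma gp_mul {r : ℂ} {k : ℕ} (h : k ≤ mlt P r) : (X - C r)^k * gp P r k = P := by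
  have hmono : ((X - C r)^k).Monic := (monic_X_sub_C r).pow k
  have h2 := modByMonic_add_div P ((X - C r)^k)
  rwa [(modByMonic_eq_zero_iff_dvd hmono).2 (pow_dvd_P h), zero_add] at h2

lemma gp_ne_zero (hP : P ≠ 0) {r : ℂ} {k : ℕ} (h : k ≤ mlt P r) : gp P r k ≠ 0 := by
  intro h0
  exact hP (by rw [← gp_mul h, h0, mul_zero])

lemma gp_natDegree (hP : P ≠ 0) {r : ℂ} {k : ℕ} (h : k ≤ mlt P r) :
    (gp P r k).natDegree = P.natDegree - k := by
  have h1 : P.natDegree = k + (gp P r k).natDegree := by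
    conv_lhs => rw [← gp_mul h]
    rw [natDegree_mul (pow_ne_zero k (X_sub_C_ne_zero r)) (gp_ne_zero hP h),
      natDegree_pow, natDegree_X_sub_C, mul_one]
  omega

lemma gp_natDegree_le (hP : P ≠ 0) {r : ℂ} {k : ℕ} (h : k ≤ mlt P r) (h1 : 1 ≤ k) :
    (gp P r k).natDegree ≤ P.natDegree - 1 := by
  rw [gp_natDegree hP h]; omega

lemma gp_step {r : ℂ} {k : ℕ} (h : k + 1 ≤ mlt P r) :
    (X - C r) * gp P r (k+1) = gp P r k := by
  apply mul_left_cancel₀ (pow_ne_zero k (X_sub_C_ne_zero r))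
  calc (X - C r)^k * ((X - C r) * gp P r (k+1))
      = (X - C r)^(k+1) * gp P r (k+1) := by ring
    _ = P := gp_mul h
    _ = (X - C r)^k * gp P r k := (gp_mul (by omega)).symm

lemma hfac0 : P = C P.leadingCoeff * (P.roots.map fun a => X - C a).prod :=
  (IsAlgClosed.splits P).eq_prod_roots

lemma gp_one_root {z : ℂ} (hz : z ∈ P.roots) :
    gp P z 1 = C P.leadingCoeff * (Multiset.map (fun a => X - C a) (P.roots.erase z)).prod := by
  apply mul_left_cancel₀ (X_sub_C_ne_zero z)
  have h1 : 1 ≤ mlt P z := by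
    rw [mlt, Nat.one_le_iff_ne_zero]
    exact fun h => (Multiset.count_pos.2 hz).ne' h
  calc (X - C z) * gp P z 1 = (X - C z)^1 * gp P z 1 := by rw [pow_one]
    _ = P := gp_mul h1
    _ = C P.leadingCoeff * (P.roots.map fun a => X - C a).prod := hfac0
    _ = C P.leadingCoeff * ((X - C z) * (Multiset.map (fun a => X - C a) (P.roots.erase z)).prod) := by
        congr 1
        rw [← Multiset.prod_cons]
        rw [show ((X - C z) ::ₘ Multiset.map (fun a => X - C a) (P.roots.erase z))
            = Multiset.map (fun a => X - C a) (z ::ₘ P.roots.erase z) from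
          (Multiset.map_cons _ _ _).symm]
        rw [Multiset.cons_erase hz]
    _ = (X - C z) * (C P.leadingCoeff * (Multiset.map (fun a => X - C a) (P.roots.erase z)).prod) := by
        ring

lemma Pderiv_eq : derivative P = ∑ r ∈ rts P, (mlt P r) • gp P r 1 := by
  classical
  conv_lhs => rw [hfac0 (P := P)]
  rw [derivative_C_mul, derivative_prod]
  have h1 : (Multiset.map
        (fun i => (Multiset.map (fun a => X - C a) (P.roots.erase i)).prod *
          derivative (X - C i)) P.roots)
      = Multiset.map (fun i => (Multiset.map (fun a => X - C a) (P.roots.erase i)).prod) P.roots := by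
    refine Multiset.map_congr rfl fun j _ => by rw [derivative_X_sub_C, mul_one]
  rw [h1]
  rw [← Multiset.sum_map_mul_left]
  have h2 : Multiset.map
      (fun i => C P.leadingCoeff * (Multiset.map (fun a => X - C a) (P.roots.erase i)).prod)
      P.roots = Multiset.map (fun i => gp P i 1) P.roots :=
    Multiset.map_congr rfl fun j hj => (gp_one_root hj).symm
  rw [h2, Finset.sum_multiset_map_count]
  rfl

lemma isCoprime_XC {a b : ℂ} (hab : a ≠ b) : IsCoprime (X - C a) (X - C b) := by
  refine ⟨C (b - a)⁻¹, -(C (b - a)⁻¹), ?_⟩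
  have hba : (b - a) ≠ 0 := sub_ne_zero.2 (Ne.symm hab)
  calc C (b-a)⁻¹ * (X - C a) + -(C (b-a)⁻¹) * (X - C b)
      = C (b-a)⁻¹ * (C b - C a) := by ring
    _ = C ((b-a)⁻¹ * (b-a)) := by rw [← C_sub, ← C_mul]
    _ = 1 := by rw [inv_mul_cancel₀ hba, C_1]

lemma key_indep (hP : P ≠ 0) (co : ℂ → ℕ → ℂ)
    (H : ∑ r ∈ rts P, ∑ k ∈ Finset.Icc 1 (mlt P r), co r k • gp P r k = 0) :
    ∀ r₀ ∈ rts P, ∀ k₀ ∈ Finset.Icc 1 (mlt P r₀), co r₀ k₀ = 0 := by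
  intro r₀ hr₀ k₀ hk₀
  classical
  set m₀ := mlt P r₀ with hm₀
  have hm1 : 1 ≤ m₀ := mlt_pos hr₀
  set Q₀ := gp P r₀ m₀ with hQ₀
  have hQ0 : Q₀.eval r₀ ≠ 0 := by
    have := eval_divByMonic_pow_rootMultiplicity_ne_zero r₀ hP
    rwa [hQ₀, gp, hm₀, mlt_eq]
  have hfacQ : ∀ k ∈ Finset.Icc 1 m₀, gp P r₀ k = (X - C r₀)^(m₀ - k) * Q₀ := by
    intro k hk
    rw [Finset.mem_Icc] at hk
    apply mul_left_cancel₀ (pow_ne_zero k (X_sub_C_ne_zero r₀))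
    have hkm : k + (m₀ - k) = m₀ := by omega
    calc (X - C r₀)^k * gp P r₀ k = P := gp_mul hk.2
      _ = (X - C r₀)^m₀ * Q₀ := (gp_mul le_rfl).symm
      _ = (X - C r₀)^k * ((X - C r₀)^(m₀ - k) * Q₀) := by
          rw [← mul_assoc, ← pow_add, hkm]
  set h := ∑ k ∈ Finset.Icc 1 m₀, co r₀ k • (X - C r₀)^(m₀ - k) with hh
  have hsum : ∑ k ∈ Finset.Icc 1 m₀, co r₀ k • gp P r₀ k = h * Q₀ := by
    rw [hh, Finset.sum_mul]
    refine Finset.sum_congr rfl fun k hk => ?_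
    rw [hfacQ k hk, smul_mul_assoc]
  have hdvd_rest : (X - C r₀)^m₀ ∣
      ∑ r ∈ (rts P).erase r₀, ∑ k ∈ Finset.Icc 1 (mlt P r), co r k • gp P r k := by
    refine Finset.dvd_sum fun r hr => Finset.dvd_sum fun k hk => ?_
    rw [Finset.mem_Icc] at hk
    have hrne : r ≠ r₀ := (Finset.mem_erase.1 hr).1
    have hcop : IsCoprime ((X - C r₀)^m₀) ((X - C r)^k) :=
      (isCoprime_XC (Ne.symm hrne)).pow
    have hdP : (X - C r₀)^m₀ ∣ (X - C r)^k * gp P r k := by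
      rw [gp_mul hk.2]
      exact pow_dvd_P le_rfl
    have hgk : (X - C r₀)^m₀ ∣ gp P r k := hcop.dvd_of_dvd_mul_left hdP
    rw [smul_eq_C_mul]
    exact hgk.mul_left _
  have hQh : (X - C r₀)^m₀ ∣ h * Q₀ := by
    have hsplit := Finset.add_sum_erase (rts P)
      (fun r => ∑ k ∈ Finset.Icc 1 (mlt P r), co r k • gp P r k) hr₀
    have : h * Q₀ = -∑ r ∈ (rts P).erase r₀, ∑ k ∈ Finset.Icc 1 (mlt P r), co r k • gp P r k := by
      rw [← hsum]
      have := hsplit.trans H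
      linear_combination this
    rw [this]
    exact hdvd_rest.neg_right
  have hndQ : ¬ (X - C r₀) ∣ Q₀ := by
    rw [dvd_iff_isRoot]
    exact hQ0
  have hdvh : (X - C r₀)^m₀ ∣ h :=
    (prime_X_sub_C r₀).pow_dvd_of_dvd_mul_right m₀ hndQ hQh
  have hzero : h = 0 := by
    by_contra hne
    have h1 : m₀ ≤ h.natDegree := by
      have := natDegree_le_of_dvd hdvh hne
      rwa [natDegree_pow, natDegree_X_sub_C, mul_one] at this
    have h2 : h.natDegree ≤ m₀ - 1 := by
      rw [hh]
      refine natDegree_sum_le_of_forall_le _ _ fun k hk => ?_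
      rw [Finset.mem_Icc] at hk
      refine (natDegree_smul_le _ _).trans ?_
      rw [natDegree_pow, natDegree_X_sub_C, mul_one]
      omega
    omega
  have hcomp : (0:Polynomial ℂ) = ∑ k ∈ Finset.Icc 1 m₀, co r₀ k • X^(m₀ - k) := by
    have := congrArg (fun p => Polynomial.comp p (X + C r₀)) hzero
    simp only [hh, zero_comp, sum_comp, smul_comp, pow_comp, sub_comp, X_comp, C_comp] at this
    rw [← this]
    simp
  have := congrArg (fun p => Polynomial.coeff p (m₀ - k₀)) hcomp
  simp only [coeff_zero, finset_sum_coeff, coeff_smul, coeff_X_pow, smul_eq_mul] at this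
  rw [Finset.sum_eq_single k₀] at this
  · rw [Finset.mem_Icc] at hk₀
    simp at this
    exact this.symm
  · intro k hk hkne
    rw [Finset.mem_Icc] at hk hk₀
    have : ¬ (m₀ - k₀ = m₀ - k) := by omega
    simp [this]
  · intro hk
    exact absurd hk₀ hk


variable (P : Polynomial ℂ)

def uv (r : ℂ) (k : ℕ) : Fin P.natDegree → ℂ := fun j => (gp P r k).coeff j
def tc (r : ℂ) (k : ℕ) : ℝ := tw (mlt P r) (1 - Complex.normSq r) k
def uv2 (r : ℂ) (k : ℕ) : Fin P.natDegree → ℂ := uv P r (k-1) + r • uv P r k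
def HeM : Matrix (Fin P.natDegree) (Fin P.natDegree) ℂ :=
  ∑ r ∈ rts P, ∑ k ∈ Finset.Icc 1 (mlt P r), ((tc P r k : ℝ) : ℂ) • outM (uv P r k)
def HdM : Matrix (Fin P.natDegree) (Fin P.natDegree) ℂ :=
  (∑ r ∈ rts P, (((mlt P r : ℝ) * (1 - Complex.normSq r) : ℝ) : ℂ) • outM (uv P r 1))
  + ∑ r ∈ rts P, ∑ k ∈ Finset.Icc 2 (mlt P r),
      ((tc P r k : ℝ) : ℂ) • (outM (uv P r k) - outM (uv2 P r k))

variable {P}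

lemma real_smul_herm (c : ℝ) {n : ℕ} {H : Matrix (Fin n) (Fin n) ℂ} (h : H.IsHermitian) :
    (((c : ℝ) : ℂ) • H).IsHermitian := by
  rw [Matrix.IsHermitian, Matrix.conjTranspose_smul, h.eq]
  congr 1
  simp [RCLike.star_def, Complex.conj_ofReal]

lemma HeM_herm : (HeM P).IsHermitian :=
  isHermitian_sum _ _ fun r _ => isHermitian_sum _ _ fun k _ =>
    real_smul_herm _ (outM_isHermitian _)

lemma HdM_herm : (HdM P).IsHermitian := by
  refine Matrix.IsHermitian.add ?_ ?_
  · exact isHermitian_sum _ _ fun r _ => real_smul_herm _ (outM_isHermitian _)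
  · exact isHermitian_sum _ _ fun r _ => isHermitian_sum _ _ fun k _ =>
      real_smul_herm _ ((outM_isHermitian _).sub (outM_isHermitian _))

lemma quad_HeM (x : Fin P.natDegree → ℂ) :
    dotProduct (star x) ((HeM P).mulVec x)
      = ((∑ r ∈ rts P, ∑ k ∈ Finset.Icc 1 (mlt P r),
          tc P r k * Complex.normSq (dotProduct (uv P r k) x) : ℝ) : ℂ) := by
  rw [HeM, quad_sum]
  push_cast
  refine Finset.sum_congr rfl fun r _ => ?_
  rw [quad_sum]
  refine Finset.sum_congr rfl fun k _ => ?_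
  rw [quad_smul, outM_quad]

lemma quad_HdM (x : Fin P.natDegree → ℂ) :
    dotProduct (star x) ((HdM P).mulVec x)
      = ((∑ r ∈ rts P, ((mlt P r : ℝ) * (1 - Complex.normSq r)
            * Complex.normSq (dotProduct (uv P r 1) x)
          + ∑ k ∈ Finset.Icc 2 (mlt P r), tc P r k *
              (Complex.normSq (dotProduct (uv P r k) x)
                - Complex.normSq (dotProduct (uv2 P r k) x))) : ℝ) : ℂ) := by
  rw [HdM, quad_add, quad_sum, quad_sum]
  have h1 : ∀ r ∈ rts P, dotProduct (star x)
        (((((mlt P r : ℝ) * (1 - Complex.normSq r) : ℝ) : ℂ) • outM (uv P r 1)).mulVec x)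
      = (((mlt P r : ℝ) * (1 - Complex.normSq r)
          * Complex.normSq (dotProduct (uv P r 1) x) : ℝ) : ℂ) := by
    intro r _
    rw [quad_smul, outM_quad]
    push_cast
    ring
  have h2 : ∀ r ∈ rts P, dotProduct (star x)
        ((∑ k ∈ Finset.Icc 2 (mlt P r),
          ((tc P r k : ℝ) : ℂ) • (outM (uv P r k) - outM (uv2 P r k))).mulVec x)
      = ((∑ k ∈ Finset.Icc 2 (mlt P r), tc P r k *
            (Complex.normSq (dotProduct (uv P r k) x)
              - Complex.normSq (dotProduct (uv2 P r k) x)) : ℝ) : ℂ) := by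
    intro r _
    rw [quad_sum]
    push_cast
    refine Finset.sum_congr rfl fun k _ => ?_
    rw [quad_smul, quad_sub, outM_quad, outM_quad]
  rw [Finset.sum_congr rfl h1, Finset.sum_congr rfl h2, ← Finset.sum_add_distrib]
  push_cast
  exact Finset.sum_congr rfl fun r _ => by ring

lemma uv2_pair (x : Fin P.natDegree → ℂ) (r : ℂ) (k : ℕ) :
    dotProduct (uv2 P r k) x
      = dotProduct (uv P r (k-1)) x + r * dotProduct (uv P r k) x := by
  rw [uv2, add_dotProduct, smul_dotProduct, smul_eq_mul]


variable {P : Polynomial ℂ}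

lemma pairings_zero_imp (hP : P ≠ 0) (hd : 1 ≤ P.natDegree) (x : Fin P.natDegree → ℂ)
    (hall : ∀ r ∈ rts P, ∀ k ∈ Finset.Icc 1 (mlt P r), dotProduct (uv P r k) x = 0) :
    x = 0 := by
  classical
  set sg := (rts P).sigma (fun r => Finset.Icc 1 (mlt P r)) with hsg
  have hcardroots : Multiset.card P.roots = P.natDegree :=
    (splits_iff_card_roots).1 (IsAlgClosed.splits P)
  have hcard : Fintype.card {p // p ∈ sg} = P.natDegree := by
    rw [Fintype.card_coe, hsg, Finset.card_sigma]
    have h3 : ∀ r ∈ rts P, (Finset.Icc 1 (mlt P r)).card = mlt P r := fun r _ => by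
      rw [Nat.card_Icc]; omega
    rw [Finset.sum_congr rfl h3]
    have h1 : ∑ r ∈ P.roots.toFinset, P.roots.count r = Multiset.card P.roots :=
      Multiset.toFinset_sum_count_eq _
    rw [← hcardroots]
    exact h1
  have hne : Nonempty {p // p ∈ sg} := by
    have hc : 0 < Multiset.card P.roots := by omega
    obtain ⟨r, hr⟩ := Multiset.card_pos_iff_exists_mem.1 hc
    have hrt : r ∈ rts P := Multiset.mem_toFinset.2 hr
    refine ⟨⟨⟨r, 1⟩, ?_⟩⟩
    rw [hsg, Finset.mem_sigma]
    exact ⟨hrt, Finset.mem_Icc.2 ⟨le_refl 1, mlt_pos hrt⟩⟩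
  have hli : LinearIndependent ℂ (fun p : {p // p ∈ sg} => uv P p.1.1 p.1.2) := by
    rw [Fintype.linearIndependent_iff]
    intro g hg i
    set co : ℂ → ℕ → ℂ := fun r k =>
      if h : (⟨r, k⟩ : Σ _ : ℂ, ℕ) ∈ sg then g ⟨⟨r, k⟩, h⟩ else 0 with hco
    have hvec : ∑ p ∈ sg, co p.1 p.2 • uv P p.1 p.2 = 0 := by
      rw [← hg, ← Finset.sum_attach sg (fun p => co p.1 p.2 • uv P p.1 p.2)]
      refine Finset.sum_congr rfl fun p _ => ?_
      have hp2 := p.2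
      simp only [hco]
      rw [dif_pos]
    have hpoly : ∑ r ∈ rts P, ∑ k ∈ Finset.Icc 1 (mlt P r), co r k • gp P r k = 0 := by
      have hsig : ∑ p ∈ sg, co p.1 p.2 • gp P p.1 p.2
          = ∑ r ∈ rts P, ∑ k ∈ Finset.Icc 1 (mlt P r), co r k • gp P r k :=
        Finset.sum_sigma (rts P) (fun r => Finset.Icc 1 (mlt P r))
          (fun p => co p.1 p.2 • gp P p.1 p.2)
      rw [← hsig]
      ext j
      rw [finset_sum_coeff]
      simp only [coeff_smul, smul_eq_mul, coeff_zero]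
      by_cases hj : j < P.natDegree
      · have hv := congrFun hvec ⟨j, hj⟩
        simp only [Finset.sum_apply, Pi.smul_apply, smul_eq_mul, Pi.zero_apply, uv] at hv
        exact hv
      · refine Finset.sum_eq_zero fun p hp => ?_
        rw [hsg, Finset.mem_sigma] at hp
        have hk := Finset.mem_Icc.1 hp.2
        have hdg : (gp P p.1 p.2).natDegree < j := by
          rw [gp_natDegree hP hk.2]
          omega
        rw [coeff_eq_zero_of_natDegree_lt hdg, mul_zero]
    have hmem := Finset.mem_sigma.1 i.2
    have h0 := key_indep hP co hpoly i.1.1 hmem.1 i.1.2 hmem.2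
    rw [hco] at h0
    simpa [Sigma.eta, i.2] using h0
  haveI := hne
  have hfr : Fintype.card {p // p ∈ sg} = Module.finrank ℂ (Fin P.natDegree → ℂ) := by
    rw [hcard, Module.finrank_fintype_fun_eq_card, Fintype.card_fin]
  let F : (Fin P.natDegree → ℂ) →ₗ[ℂ] ℂ :=
    { toFun := fun u => dotProduct u x,
      map_add' := fun a c => add_dotProduct a c x,
      map_smul' := fun c a => smul_dotProduct c a x }
  have hF0 : F = 0 := by
    apply (basisOfLinearIndependentOfCardEqFinrank hli hfr).ext
    intro i
    rw [coe_basisOfLinearIndependentOfCardEqFinrank]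
    have hmem := Finset.mem_sigma.1 i.2
    have := hall i.1.1 hmem.1 i.1.2 hmem.2
    simpa [F] using this
  funext j
  have hj := congrArg (fun (G : (Fin P.natDegree → ℂ) →ₗ[ℂ] ℂ) => G (Pi.single j 1)) hF0
  simpa [F, single_dotProduct] using hj


variable {P : Polynomial ℂ}

lemma root_eval_zero (hP : P ≠ 0) {r : ℂ} (hr : r ∈ rts P) : P.eval r = 0 := by
  have : r ∈ P.roots := Multiset.mem_toFinset.1 hr
  exact ((mem_roots hP).1 this)

lemma root_nsq_le (hP : P ≠ 0)
    (hroots : ∀ z : ℂ, P.eval z = 0 → ‖z‖ ≤ 1) {r : ℂ} (hr : r ∈ rts P) :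
    Complex.normSq r ≤ 1 := by
  have h := hroots r (root_eval_zero hP hr)
  rw [← Complex.sq_norm]
  nlinarith [norm_nonneg r]

lemma root_nsq_lt (hP : P ≠ 0)
    (hroots : ∀ z : ℂ, P.eval z = 0 → ‖z‖ ≤ 1)
    (hsimple : ∀ z : ℂ, P.eval z = 0 → ‖z‖ = 1 → P.derivative.eval z ≠ 0)
    {r : ℂ} (hr : r ∈ rts P) (hm2 : 2 ≤ mlt P r) : Complex.normSq r < 1 := by
  rcases lt_or_ge (Complex.normSq r) 1 with h | h
  · exact h
  · exfalso
    have h1 := root_nsq_le hP hroots hr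
    have habs : ‖r‖ = 1 := by
      have h3 : Complex.normSq r = 1 := le_antisymm h1 h
      have h4 := Complex.sq_norm r
      nlinarith [norm_nonneg r]
    have hder := hsimple r (root_eval_zero hP hr) habs
    have hdvd : (X - C r)^2 ∣ P := pow_dvd_P hm2
    obtain ⟨q, hq⟩ := hdvd
    apply hder
    rw [hq]
    simp [derivative_mul, derivative_pow, derivative_X_sub_C]

lemma tc_pos (hP : P ≠ 0)
    (hroots : ∀ z : ℂ, P.eval z = 0 → ‖z‖ ≤ 1)
    (hsimple : ∀ z : ℂ, P.eval z = 0 → ‖z‖ = 1 → P.derivative.eval z ≠ 0)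
    {r : ℂ} (hr : r ∈ rts P) {k : ℕ} (hk : k ∈ Finset.Icc 1 (mlt P r)) :
    0 < tc P r k := by
  rw [Finset.mem_Icc] at hk
  rcases Nat.lt_or_ge k 2 with h2 | h2
  · have : k = 1 := by omega
    subst this
    rw [tc, tw]
    simp only [le_refl, if_pos]
    have := mlt_pos hr
    norm_num
    omega
  · have hm2 : 2 ≤ mlt P r := le_trans h2 hk.2
    have he : 0 < 1 - Complex.normSq r := by
      have := root_nsq_lt hP hroots hsimple hr hm2
      linarith
    exact tw_pos (by have := mlt_pos hr; omega) he k

lemma HdM_psd (hP : P ≠ 0)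
    (hroots : ∀ z : ℂ, P.eval z = 0 → ‖z‖ ≤ 1)
    (hsimple : ∀ z : ℂ, P.eval z = 0 → ‖z‖ = 1 → P.derivative.eval z ≠ 0) :
    (HdM P).PosSemidef := by
  rw [Matrix.posSemidef_iff_dotProduct_mulVec]
  constructor
  · exact HdM_herm
  · intro x
    rw [quad_HdM, Complex.zero_le_real]
    refine Finset.sum_nonneg fun r hr => ?_
    have hbl := block_nonneg (mlt P r) (mlt_pos hr) r (root_nsq_le hP hroots hr)
      (root_nsq_lt hP hroots hsimple hr) (fun k => dotProduct (uv P r k) x)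
    have heq : ∀ k ∈ Finset.Icc 2 (mlt P r),
        tc P r k * (Complex.normSq (dotProduct (uv P r k) x)
          - Complex.normSq (dotProduct (uv2 P r k) x))
        = tw (mlt P r) (1 - Complex.normSq r) k *
            (Complex.normSq (dotProduct (uv P r k) x)
              - Complex.normSq (dotProduct (uv P r (k-1)) x
                + r * dotProduct (uv P r k) x)) := by
      intro k _
      rw [tc, uv2_pair]
    rw [Finset.sum_congr rfl heq]
    exact hbl

lemma HeM_pd (hP : P ≠ 0) (hd : 1 ≤ P.natDegree)
    (hroots : ∀ z : ℂ, P.eval z = 0 → ‖z‖ ≤ 1)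
    (hsimple : ∀ z : ℂ, P.eval z = 0 → ‖z‖ = 1 → P.derivative.eval z ≠ 0) :
    (HeM P).PosDef := by
  rw [Matrix.posDef_iff_dotProduct_mulVec]
  constructor
  · exact HeM_herm
  · intro x hx
    rw [quad_HeM, Complex.zero_lt_real]
    have hex : ∃ r ∈ rts P, ∃ k ∈ Finset.Icc 1 (mlt P r),
        dotProduct (uv P r k) x ≠ 0 := by
      by_contra hnot
      push_neg at hnot
      exact hx (pairings_zero_imp hP hd x hnot)
    obtain ⟨r0, hr0, k0, hk0, hne0⟩ := hex
    refine Finset.sum_pos' (fun r hr => Finset.sum_nonneg fun k hk =>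
      mul_nonneg (tc_pos hP hroots hsimple hr hk).le (Complex.normSq_nonneg _)) ?_
    refine ⟨r0, hr0, ?_⟩
    refine Finset.sum_pos' (fun k hk =>
      mul_nonneg (tc_pos hP hroots hsimple hr0 hk).le (Complex.normSq_nonneg _)) ?_
    refine ⟨k0, hk0, ?_⟩
    exact mul_pos (tc_pos hP hroots hsimple hr0 hk0) (Complex.normSq_pos.2 hne0)


end EnergyDissipation

/-- Lemma 1: the energy-dissipation balance law for recurrence
relations. If all roots of `P` lie in the closed unit disk and those of modulus `1`
are simple, there are a positive definite Hermitian form `q_e` and a nonnegative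
Hermitian form `q_d` on `ℂ^ν` such that
`2 Re( conj(T(P'(T)v)(n)) · (P(T)v)(n) ) = ν |(P(T)v)(n)|²
  + q_e(v(n+1),…,v(n+ν)) − q_e(v(n),…,v(n+ν−1)) + q_d(v(n),…,v(n+ν−1))`;
in particular `n ↦ q_e(v(n),…,v(n+ν−1))` is nonincreasing along any solution
of `P(T)v = 0`. -/
theorem stmt_0 (ν : ℕ) (hν : 1 ≤ ν) (P : Polynomial ℂ) (hdeg : P.natDegree = ν)
    (hroots : ∀ z : ℂ, P.eval z = 0 → ‖z‖ ≤ 1)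
    (hsimple : ∀ z : ℂ, P.eval z = 0 → ‖z‖ = 1 → P.derivative.eval z ≠ 0) :
    ∃ He Hd : Matrix (Fin ν) (Fin ν) ℂ, He.PosDef ∧ Hd.PosSemidef ∧
      (∀ (v : ℕ → ℂ) (n : ℕ),
        2 * ((starRingEnd ℂ) (∑ i ∈ Finset.Icc 1 ν, (i : ℂ) * P.coeff i * v (n + i))
              * polyAct P v n).re
          = (ν : ℝ) * ‖polyAct P v n‖ ^ 2
            + hermForm He (fun i : Fin ν => v (n + 1 + i))
            - hermForm He (fun i : Fin ν => v (n + i))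
            + hermForm Hd (fun i : Fin ν => v (n + i)))
      ∧ (∀ v : ℕ → ℂ, (∀ n : ℕ, polyAct P v n = 0) →
          ∀ n : ℕ, hermForm He (fun i : Fin ν => v (n + 1 + i))
            ≤ hermForm He (fun i : Fin ν => v (n + i))) := by
  subst hdeg
  have hP : P ≠ 0 := by
    intro h
    rw [h] at hν
    simp at hν
  have hcardroots : Multiset.card P.roots = P.natDegree :=
    (splits_iff_card_roots).1 (IsAlgClosed.splits P)
  have hmltsum : ∑ r ∈ rts P, mlt P r = P.natDegree := by
    have h1 : ∑ r ∈ P.roots.toFinset, P.roots.count r = Multiset.card P.roots :=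
      Multiset.toFinset_sum_count_eq _
    rw [← hcardroots]
    exact h1
  have hmain : ∀ (v : ℕ → ℂ) (n : ℕ),
      2 * ((starRingEnd ℂ) (∑ i ∈ Finset.Icc 1 P.natDegree, (i : ℂ) * P.coeff i * v (n + i))
            * polyAct P v n).re
        = (P.natDegree : ℝ) * ‖polyAct P v n‖ ^ 2
          + hermForm (HeM P) (fun i : Fin P.natDegree => v (n + 1 + i))
          - hermForm (HeM P) (fun i : Fin P.natDegree => v (n + i))
          + hermForm (HdM P) (fun i : Fin P.natDegree => v (n + i)) := by
    intro v n
    set w0 : Fin P.natDegree → ℂ := fun i => v (n + ↑i) with hw0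
    set w1 : Fin P.natDegree → ℂ := fun i => v (n + 1 + ↑i) with hw1
    set L : Polynomial ℂ → ℂ :=
      fun q => ∑ j ∈ Finset.range (P.natDegree + 1), q.coeff j * v (n + j) with hL
    have hLadd : ∀ p q : Polynomial ℂ, L (p + q) = L p + L q := by
      intro p q
      simp only [hL, coeff_add, add_mul, Finset.sum_add_distrib]
    have hLC : ∀ (c : ℂ) (q : Polynomial ℂ), L (C c * q) = c * L q := by
      intro c q
      simp only [hL, coeff_C_mul, Finset.mul_sum, mul_assoc]
    have hLsmul : ∀ (m : ℕ) (q : Polynomial ℂ), L (m • q) = (m : ℂ) * L q := by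
      intro m q
      have hc : ∀ j, (m • q).coeff j = (m : ℂ) * q.coeff j := fun j => by
        rw [coeff_smul]
        simp [nsmul_eq_mul]
      simp only [hL, hc, Finset.mul_sum, mul_assoc]
    have hLsum : ∀ (s : Finset ℂ) (f : ℂ → Polynomial ℂ),
        L (∑ i ∈ s, f i) = ∑ i ∈ s, L (f i) := by
      intro s f
      simp only [hL, finset_sum_coeff, Finset.sum_mul]
      exact Finset.sum_comm
    have hdeg_gp : ∀ r ∈ rts P, ∀ k ∈ Finset.Icc 1 (mlt P r),
        (gp P r k).natDegree < P.natDegree := by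
      intro r hr k hk
      rw [Finset.mem_Icc] at hk
      rw [gp_natDegree hP hk.2]
      omega
    have hpair0 : ∀ r ∈ rts P, ∀ k ∈ Finset.Icc 1 (mlt P r),
        dotProduct (uv P r k) w0 = L (gp P r k) := by
      intro r hr k hk
      have hlt := hdeg_gp r hr k hk
      have h1 : ∑ i : Fin P.natDegree, (gp P r k).coeff i * v (n + ↑i)
          = ∑ j ∈ Finset.range P.natDegree, (gp P r k).coeff j * v (n + j) :=
        Fin.sum_univ_eq_sum_range (fun j => (gp P r k).coeff j * v (n + j)) _
      rw [dotProduct]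
      simp only [hw0, uv]
      rw [h1]
      simp only [hL]
      rw [Finset.sum_range_succ, coeff_eq_zero_of_natDegree_lt hlt, zero_mul, add_zero]
    have hpair1 : ∀ r ∈ rts P, ∀ k ∈ Finset.Icc 1 (mlt P r),
        dotProduct (uv P r k) w1 = L (X * gp P r k) := by
      intro r hr k hk
      have h1 : ∑ i : Fin P.natDegree, (gp P r k).coeff i * v (n + 1 + ↑i)
          = ∑ j ∈ Finset.range P.natDegree, (gp P r k).coeff j * v (n + 1 + j) :=
        Fin.sum_univ_eq_sum_range (fun j => (gp P r k).coeff j * v (n + 1 + j)) _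
      rw [dotProduct]
      simp only [hw1, uv]
      rw [h1]
      simp only [hL]
      rw [Finset.sum_range_succ', coeff_X_mul_zero, zero_mul, add_zero]
      refine Finset.sum_congr rfl fun j _ => ?_
      rw [coeff_X_mul, show n + (j + 1) = n + 1 + j by omega]
    have hX1 : ∀ r ∈ rts P, L (X * gp P r 1) = L P + r * L (gp P r 1) := by
      intro r hr
      have hmul := gp_mul (P := P) (r := r) (k := 1) (mlt_pos hr)
      have hid : X * gp P r 1 = P + C r * gp P r 1 := by linear_combination hmul
      rw [hid, hLadd, hLC]
    have hterm : ∀ r ∈ rts P,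
        (∑ k ∈ Finset.Icc 1 (mlt P r), tc P r k * Complex.normSq (L (X * gp P r k)))
        - (∑ k ∈ Finset.Icc 1 (mlt P r), tc P r k * Complex.normSq (L (gp P r k)))
        + ((mlt P r : ℝ) * (1 - Complex.normSq r) * Complex.normSq (L (gp P r 1))
          + ∑ k ∈ Finset.Icc 2 (mlt P r), tc P r k * (Complex.normSq (L (gp P r k))
              - Complex.normSq (L (gp P r (k-1)) + r * L (gp P r k))))
        = (mlt P r : ℝ) * (Complex.normSq (L P)
            + 2 * (L P * (starRingEnd ℂ) (r * L (gp P r 1))).re) := by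
      intro r hr
      have hm1 : 1 ≤ mlt P r := mlt_pos hr
      have hins : Finset.Icc 1 (mlt P r) = insert 1 (Finset.Icc 2 (mlt P r)) := by
        ext t
        simp only [Finset.mem_Icc, Finset.mem_insert]
        omega
      have h1notin : (1:ℕ) ∉ Finset.Icc 2 (mlt P r) := by simp
      rw [hins, Finset.sum_insert h1notin, Finset.sum_insert h1notin]
      have htc1 : tc P r 1 = (mlt P r : ℝ) := by simp [tc, tw]
      have hcancel : ∀ k ∈ Finset.Icc 2 (mlt P r),
          tc P r k * Complex.normSq (L (X * gp P r k))
          - tc P r k * Complex.normSq (L (gp P r k))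
          + tc P r k * (Complex.normSq (L (gp P r k))
              - Complex.normSq (L (gp P r (k-1)) + r * L (gp P r k))) = 0 := by
        intro k hk
        rw [Finset.mem_Icc] at hk
        have hstep := gp_step (P := P) (r := r) (k := k - 1) (by omega)
        rw [show k - 1 + 1 = k by omega] at hstep
        have hid : X * gp P r k = gp P r (k-1) + C r * gp P r k := by
          linear_combination hstep
        rw [hid, hLadd, hLC]
        ring
      have hS : ∑ k ∈ Finset.Icc 2 (mlt P r), tc P r k * Complex.normSq (L (X * gp P r k))
          - ∑ k ∈ Finset.Icc 2 (mlt P r), tc P r k * Complex.normSq (L (gp P r k))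
          + ∑ k ∈ Finset.Icc 2 (mlt P r), tc P r k * (Complex.normSq (L (gp P r k))
              - Complex.normSq (L (gp P r (k-1)) + r * L (gp P r k))) = 0 := by
        rw [← Finset.sum_sub_distrib, ← Finset.sum_add_distrib]
        exact Finset.sum_eq_zero hcancel
      have hA1 : tc P r 1 * Complex.normSq (L (X * gp P r 1))
          - tc P r 1 * Complex.normSq (L (gp P r 1))
          + (mlt P r : ℝ) * (1 - Complex.normSq r) * Complex.normSq (L (gp P r 1))
          = (mlt P r : ℝ) * (Complex.normSq (L P)
              + 2 * (L P * (starRingEnd ℂ) (r * L (gp P r 1))).re) := by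
        rw [htc1, hX1 r hr, Complex.normSq_add, Complex.normSq_mul]
        ring
      linarith [hS, hA1]
    -- rewrite the goal
    have hB : polyAct P v n = L P := by
      rw [polyAct, hL]
    have hA' : (∑ i ∈ Finset.Icc 1 P.natDegree, (i : ℂ) * P.coeff i * v (n + i))
        = L (X * derivative P) := by
      simp only [hL]
      rw [Finset.sum_range_succ', coeff_X_mul_zero, zero_mul, add_zero]
      rw [← Finset.Ico_add_one_right_eq_Icc, Finset.sum_Ico_eq_sum_range]
      try simp only [Nat.add_sub_cancel]

      refine Finset.sum_congr rfl fun j _ => ?_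
      rw [coeff_X_mul, coeff_derivative, show n + (1 + j) = n + (j + 1) by omega]
      push_cast
      ring
    have hqe0 : hermForm (HeM P) w0
        = ∑ r ∈ rts P, ∑ k ∈ Finset.Icc 1 (mlt P r),
            tc P r k * Complex.normSq (L (gp P r k)) := by
      rw [hermForm, quad_HeM, Complex.ofReal_re]
      exact Finset.sum_congr rfl fun r hr => Finset.sum_congr rfl fun k hk => by
        rw [hpair0 r hr k hk]
    have hqe1 : hermForm (HeM P) w1
        = ∑ r ∈ rts P, ∑ k ∈ Finset.Icc 1 (mlt P r),
            tc P r k * Complex.normSq (L (X * gp P r k)) := by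
      rw [hermForm, quad_HeM, Complex.ofReal_re]
      exact Finset.sum_congr rfl fun r hr => Finset.sum_congr rfl fun k hk => by
        rw [hpair1 r hr k hk]
    have hqd : hermForm (HdM P) w0
        = ∑ r ∈ rts P, ((mlt P r : ℝ) * (1 - Complex.normSq r)
              * Complex.normSq (L (gp P r 1))
            + ∑ k ∈ Finset.Icc 2 (mlt P r), tc P r k * (Complex.normSq (L (gp P r k))
                - Complex.normSq (L (gp P r (k-1)) + r * L (gp P r k)))) := by
      rw [hermForm, quad_HdM, Complex.ofReal_re]
      refine Finset.sum_congr rfl fun r hr => ?_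
      have hm1 : 1 ≤ mlt P r := mlt_pos hr
      have h1mem : (1:ℕ) ∈ Finset.Icc 1 (mlt P r) := Finset.mem_Icc.2 ⟨le_refl 1, hm1⟩
      rw [hpair0 r hr 1 h1mem]
      congr 1
      refine Finset.sum_congr rfl fun k hk => ?_
      rw [Finset.mem_Icc] at hk
      have hkmem : k ∈ Finset.Icc 1 (mlt P r) := Finset.mem_Icc.2 ⟨by omega, hk.2⟩
      have hk1mem : k - 1 ∈ Finset.Icc 1 (mlt P r) := Finset.mem_Icc.2 ⟨by omega, by omega⟩
      rw [uv2_pair, hpair0 r hr k hkmem, hpair0 r hr (k-1) hk1mem]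
    rw [hB, hA', hqe0, hqe1, hqd, Complex.sq_norm]
    -- aggregate over roots
    have hagg : (∑ r ∈ rts P, ∑ k ∈ Finset.Icc 1 (mlt P r),
          tc P r k * Complex.normSq (L (X * gp P r k)))
        - (∑ r ∈ rts P, ∑ k ∈ Finset.Icc 1 (mlt P r),
            tc P r k * Complex.normSq (L (gp P r k)))
        + (∑ r ∈ rts P, ((mlt P r : ℝ) * (1 - Complex.normSq r)
              * Complex.normSq (L (gp P r 1))
            + ∑ k ∈ Finset.Icc 2 (mlt P r), tc P r k * (Complex.normSq (L (gp P r k))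
                - Complex.normSq (L (gp P r (k-1)) + r * L (gp P r k)))))
        = ∑ r ∈ rts P, (mlt P r : ℝ) * (Complex.normSq (L P)
            + 2 * (L P * (starRingEnd ℂ) (r * L (gp P r 1))).re) := by
      rw [← Finset.sum_sub_distrib, ← Finset.sum_add_distrib]
      exact Finset.sum_congr rfl hterm
    -- the complex sum S
    set S : ℂ := ∑ r ∈ rts P, (mlt P r : ℂ) * (r * L (gp P r 1)) with hSdef
    have hSval : L (X * derivative P) = (P.natDegree : ℂ) * L P + S := by
      have h1 : X * derivative P = ∑ r ∈ rts P, (mlt P r) • (X * gp P r 1) := by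
        rw [Pderiv_eq, Finset.mul_sum]
        exact Finset.sum_congr rfl fun r _ => mul_smul_comm _ _ _
      have h2 : L (X * derivative P)
          = ∑ r ∈ rts P, (mlt P r : ℂ) * (L P + r * L (gp P r 1)) := by
        rw [h1, hLsum]
        refine Finset.sum_congr rfl fun r hr => ?_
        rw [hLsmul, hX1 r hr]
      have h3 : ∑ r ∈ rts P, (mlt P r : ℂ) = (P.natDegree : ℂ) := by
        rw [← Nat.cast_sum, hmltsum]
      rw [h2]
      calc ∑ r ∈ rts P, (mlt P r : ℂ) * (L P + r * L (gp P r 1))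
          = ∑ r ∈ rts P, ((mlt P r : ℂ) * L P + (mlt P r : ℂ) * (r * L (gp P r 1))) := by
            refine Finset.sum_congr rfl fun r _ => by ring
        _ = (∑ r ∈ rts P, (mlt P r : ℂ)) * L P + S := by
            rw [Finset.sum_add_distrib, Finset.sum_mul, hSdef]
        _ = (P.natDegree : ℂ) * L P + S := by rw [h3]
    have hsplit : ∑ r ∈ rts P, (mlt P r : ℝ) * (Complex.normSq (L P)
          + 2 * (L P * (starRingEnd ℂ) (r * L (gp P r 1))).re)
        = (P.natDegree : ℝ) * Complex.normSq (L P) + 2 * (L P * (starRingEnd ℂ) S).re := by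
      have hconjS : (starRingEnd ℂ) S
          = ∑ r ∈ rts P, (mlt P r : ℂ) * (starRingEnd ℂ) (r * L (gp P r 1)) := by
        rw [hSdef, map_sum]
        refine Finset.sum_congr rfl fun r _ => ?_
        rw [map_mul, map_natCast]
      have hre : ∀ r ∈ rts P, (mlt P r : ℝ) * (Complex.normSq (L P)
            + 2 * (L P * (starRingEnd ℂ) (r * L (gp P r 1))).re)
          = (mlt P r : ℝ) * Complex.normSq (L P)
            + 2 * (L P * ((mlt P r : ℂ) * (starRingEnd ℂ) (r * L (gp P r 1)))).re := by
        intro r _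
        have h5 : (L P * ((mlt P r : ℂ) * (starRingEnd ℂ) (r * L (gp P r 1)))).re
            = (mlt P r : ℝ) * (L P * (starRingEnd ℂ) (r * L (gp P r 1))).re := by
          rw [show L P * ((mlt P r : ℂ) * (starRingEnd ℂ) (r * L (gp P r 1)))
              = ((mlt P r : ℝ) : ℂ) * (L P * (starRingEnd ℂ) (r * L (gp P r 1))) by
            push_cast; ring]
          rw [Complex.re_ofReal_mul]
        rw [h5]
        ring
      rw [Finset.sum_congr rfl hre, Finset.sum_add_distrib]
      congr 1
      · rw [← Finset.sum_mul]
        congr 1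
        rw [← Nat.cast_sum, hmltsum]
      · rw [hconjS, Finset.mul_sum, Complex.re_sum, Finset.mul_sum]
    -- final arithmetic
    have hfin : 2 * ((starRingEnd ℂ) (L (X * derivative P)) * L P).re
        = (P.natDegree : ℝ) * Complex.normSq (L P)
          + ((P.natDegree : ℝ) * Complex.normSq (L P) + 2 * (L P * (starRingEnd ℂ) S).re) := by
      have hS2 : S = L (X * derivative P) - (P.natDegree : ℂ) * L P := by
        linear_combination -hSval
      rw [hS2]
      have hc1 : (starRingEnd ℂ) (L (X * derivative P) - (P.natDegree : ℂ) * L P)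
          = (starRingEnd ℂ) (L (X * derivative P))
            - (P.natDegree : ℂ) * (starRingEnd ℂ) (L P) := by
        rw [map_sub, map_mul, map_natCast]
      rw [hc1]
      have hmc : L P * ((starRingEnd ℂ) (L (X * derivative P))
            - (P.natDegree : ℂ) * (starRingEnd ℂ) (L P))
          = L P * (starRingEnd ℂ) (L (X * derivative P))
            - ((P.natDegree : ℝ) : ℂ) * (L P * (starRingEnd ℂ) (L P)) := by
        push_cast
        ring
      rw [hmc]
      rw [Complex.sub_re, Complex.re_ofReal_mul, Complex.mul_conj]
      have hcomm : ((starRingEnd ℂ) (L (X * derivative P)) * L P).re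
          = (L P * (starRingEnd ℂ) (L (X * derivative P))).re := by
        rw [mul_comm]
      rw [hcomm]
      simp only [Complex.ofReal_re]
      ring
    linarith [hagg, hsplit, hfin]
  refine ⟨HeM P, HdM P, HeM_pd hP hν hroots hsimple, HdM_psd hP hroots hsimple, hmain, ?_⟩
  intro v hv n
  have h := hmain v n
  rw [hv n] at h
  simp only [mul_zero, Complex.zero_re, map_zero, norm_zero] at h
  have hqd : 0 ≤ hermForm (HdM P) (fun i : Fin P.natDegree => v (n + ↑i)) := by
    have h2 := (Matrix.posSemidef_iff_dotProduct_mulVec.1 (HdM_psd hP hroots hsimple)).2 (fun i : Fin P.natDegree => v (n + ↑i))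
    rw [Complex.le_def] at h2
    simpa [hermForm] using h2.1
  have h0 : (0:ℝ) ^ 2 = 0 := by norm_num
  rw [h0] at h
  linarith [h, hqd]
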